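/- Control of the correction sequence m (appendix lemma, eq. (C2)). Under the stated hypotheses, ‖m‖_P² ≤ 8χ²κ²ν⁻²‖y_g + z_g‖_P² + 4χ(1 − (4χ)⁻¹)‖m‖_P² − 4χ‖m⁺‖_P². -/

import Mathlib

open MeasureTheory RealInnerProductSpace
open scoped ENNReal

noncomputable section

/-- The space `E = (ℝ^d)^n` with the standard Euclidean inner product. -/
abbrev Vs (d n : ℕ) : Type := EuclideanSpace ℝ (Fin n × Fin d)

/-- The consensus subspace `L = {(x₁,…,xₙ) : x₁ = ⋯ = xₙ}` of `(ℝ^d)^n`. -/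
def consensus (d n : ℕ) : Submodule ℝ (Vs d n) where
  carrier := {x | ∀ i j : Fin n, ∀ k : Fin d, x (i, k) = x (j, k)}
  add_mem' := by
    intro a b ha hb i j k
    simp only [Set.mem_setOf_eq] at ha hb
    simp [PiLp.add_apply, ha i j k, hb i j k]
  zero_mem' := by intro i j k; rfl
  smul_mem' := by
    intro c a ha i j k
    simp only [Set.mem_setOf_eq] at ha
    simp [PiLp.smul_apply, ha i j k]

/-- Orthogonal projection of `E` onto `L⊥`. -/
def projP (d n : ℕ) (x : Vs d n) : Vs d n :=
  (Submodule.orthogonalProjectionOnto (consensus d n)ᗮ x : Vs d n)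

/-- The Kronecker product `W ⊗ I_d` acting on `E = (ℝ^d)^n`. -/
def kron {d n : ℕ} (W : Matrix (Fin n) (Fin n) ℝ) (x : Vs d n) : Vs d n :=
  WithLp.toLp 2 (fun p => ∑ j, W p.1 j * x (j, p.2))

/-- `kron` is additive w.r.t. subtraction. -/
lemma kron_sub' {d n : ℕ} (W : Matrix (Fin n) (Fin n) ℝ) (x y : Vs d n) :
    kron W (x - y) = kron W x - kron W y := by
  ext p
  simp [kron, mul_sub, Finset.sum_sub_distrib]

/-- `kron W` kills the consensus subspace when the row sums of `W` vanish. -/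
lemma kron_consensus_eq_zero {d n : ℕ} (W : Matrix (Fin n) (Fin n) ℝ)
    (hWker : ∀ v : Fin n → ℝ, W.mulVec v = 0 ↔ ∃ c, ∀ i, v i = c)
    (q : Vs d n) (hq : q ∈ consensus d n) : kron W q = 0 := by
  have h1 : W.mulVec (fun _ => 1) = 0 := (hWker _).mpr ⟨1, fun _ => rfl⟩
  ext p
  have hrow : ∑ j, W p.1 j = 0 := by
    have := congrFun h1 p.1
    simpa [Matrix.mulVec, dotProduct] using this
  have hcon : ∀ j, q (j, p.2) = q (p.1, p.2) := fun j => hq j p.1 p.2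
  show (∑ j, W p.1 j * q (j, p.2)) = 0
  calc (∑ j, W p.1 j * q (j, p.2)) = ∑ j, W p.1 j * q (p.1, p.2) :=
        Finset.sum_congr rfl fun j _ => by rw [hcon j]
    _ = 0 := by rw [← Finset.sum_mul, hrow, zero_mul]

/-- `kron W` is self-adjoint when `W` is symmetric. -/
lemma inner_kron_symm {d n : ℕ} (W : Matrix (Fin n) (Fin n) ℝ) (hWsymm : W.IsSymm)
    (q u : Vs d n) : ⟪q, kron W u⟫ = ⟪kron W q, u⟫ := by
  have hsym : ∀ i j : Fin n, W j i = W i j := fun i j => by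
    conv_lhs => rw [← hWsymm, Matrix.transpose_apply]
  simp only [PiLp.inner_apply, RCLike.inner_apply, starRingEnd_apply, star_trivial, kron, PiLp.toLp_apply]
  rw [Fintype.sum_prod_type, Fintype.sum_prod_type]
  conv_lhs => enter [2, x, 2, y]; rw [mul_comm]
  conv_rhs => enter [2, x, 2, y]; rw [mul_comm]
  calc ∑ i, ∑ k, q (i, k) * ∑ j, W i j * u (j, k)
      = ∑ i, ∑ j, ∑ k, q (i, k) * (W i j * u (j, k)) := by
        refine Finset.sum_congr rfl fun i _ => ?_
        simp_rw [Finset.mul_sum]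
        exact Finset.sum_comm
    _ = ∑ j, ∑ i, ∑ k, q (i, k) * (W i j * u (j, k)) := Finset.sum_comm
    _ = ∑ j, ∑ k, (∑ i, W j i * q (i, k)) * u (j, k) := by
        refine Finset.sum_congr rfl fun j _ => ?_
        rw [Finset.sum_comm]
        refine Finset.sum_congr rfl fun k _ => ?_
        rw [Finset.sum_mul]
        refine Finset.sum_congr rfl fun i _ => ?_
        rw [hsym i j]; ring

/-- `kron W` preserves `L⊥` when `W` is symmetric with constant kernel. -/
lemma kron_mem_orthogonal {d n : ℕ} (W : Matrix (Fin n) (Fin n) ℝ) (hWsymm : W.IsSymm)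
    (hWker : ∀ v : Fin n → ℝ, W.mulVec v = 0 ↔ ∃ c, ∀ i, v i = c)
    (u : Vs d n) (hu : u ∈ (consensus d n)ᗮ) : kron W u ∈ (consensus d n)ᗮ := by
  rw [Submodule.mem_orthogonal]
  intro q hq
  rw [inner_kron_symm W hWsymm, kron_consensus_eq_zero W hWker q hq, inner_zero_left]

set_option maxHeartbeats 1000000 in
/-- Control of the correction sequence `m` (appendix lemma, eq. (C2)):
with `v := κν⁻¹(y_g + z_g)` and `m⁺ := v + m − (W ⊗ I_d)(v + m)`,
`‖m‖_P² ≤ 8χ²κ²ν⁻²‖y_g + z_g‖_P² + 4χ(1 − (4χ)⁻¹)‖m‖_P² − 4χ‖m⁺‖_P²`. -/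
theorem correction_sequence_control
    {d n : ℕ} (hd : 0 < d) (hn : 0 < n)
    (W : Matrix (Fin n) (Fin n) ℝ) (hWsymm : W.IsSymm) (hWpsd : W.PosSemidef)
    (hWker : ∀ v : Fin n → ℝ, W.mulVec v = 0 ↔ ∃ c, ∀ i, v i = c)
    (χ : ℝ) (hχ : 1 ≤ χ)
    (hcontr : ∀ u ∈ (consensus d n)ᗮ, ‖kron W u - u‖ ^ 2 ≤ (1 - χ⁻¹) * ‖u‖ ^ 2)
    (κ ν : ℝ) (hκ : 0 < κ) (hν : 0 < ν)
    (yg zg m : Vs d n)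
    (v : Vs d n) (hv : v = (κ * ν⁻¹) • (yg + zg))
    (mp : Vs d n) (hmp : mp = v + m - kron W (v + m)) :
    ‖projP d n m‖ ^ 2 ≤
      8 * χ ^ 2 * κ ^ 2 * ν⁻¹ ^ 2 * ‖projP d n (yg + zg)‖ ^ 2
        + 4 * χ * (1 - (4 * χ)⁻¹) * ‖projP d n m‖ ^ 2
        - 4 * χ * ‖projP d n mp‖ ^ 2 := by
  have hχ0 : 0 < χ := lt_of_lt_of_le one_pos hχ
  set x : Vs d n := v + m with hx
  set u : Vs d n := projP d n x with hu
  have hu_mem : u ∈ (consensus d n)ᗮ := by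
    rw [hu, projP]; exact SetLike.coe_mem _
  -- x - u lies in the consensus subspace
  have hxsub : x - u ∈ consensus d n := by
    have h := Submodule.sub_starProjection_mem_orthogonal (K := (consensus d n)ᗮ) x
    rwa [Submodule.orthogonal_orthogonal] at h
  -- kron W x = kron W u
  have hkx : kron W x = kron W u := by
    have h0 : kron W (x - u) = 0 := kron_consensus_eq_zero W hWker _ hxsub
    rw [kron_sub'] at h0
    exact sub_eq_zero.mp h0
  have hkmem : kron W u ∈ (consensus d n)ᗮ := kron_mem_orthogonal W hWsymm hWker u hu_mem
  -- projection of mp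
  have hPmp : projP d n mp = u - kron W u := by
    rw [hmp]
    show (Submodule.orthogonalProjectionOnto (consensus d n)ᗮ (x - kron W x) : Vs d n) = _
    rw [map_sub, hkx]
    have h1 : ((Submodule.orthogonalProjectionOnto (consensus d n)ᗮ (kron W u)) : Vs d n) = kron W u :=
      Submodule.starProjection_eq_self_iff.mpr hkmem
    rw [AddSubgroupClass.coe_sub, h1]
    rfl
  have hc2 : ‖projP d n mp‖ ^ 2 ≤ (1 - χ⁻¹) * ‖u‖ ^ 2 := by
    rw [hPmp, norm_sub_rev]
    exact hcontr u hu_mem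
  -- u = projP v + projP m and ‖projP v‖ = κν⁻¹ ‖projP (yg+zg)‖
  have hu_eq : u = projP d n v + projP d n m := by
    rw [hu, hx, projP, projP, projP, map_add]; rfl
  have hA : 0 < κ * ν⁻¹ := mul_pos hκ (inv_pos.mpr hν)
  have hPv : ‖projP d n v‖ = κ * ν⁻¹ * ‖projP d n (yg + zg)‖ := by
    rw [hv]
    show ‖(Submodule.orthogonalProjectionOnto (consensus d n)ᗮ ((κ * ν⁻¹) • (yg + zg)) : Vs d n)‖ = _
    rw [_root_.map_smul]
    have : ((κ * ν⁻¹) • (Submodule.orthogonalProjectionOnto (consensus d n)ᗮ (yg + zg)) : (consensus d n)ᗮ) =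
        (κ * ν⁻¹) • (Submodule.orthogonalProjectionOnto (consensus d n)ᗮ (yg + zg)) := rfl
    rw [show ((((κ * ν⁻¹) • Submodule.orthogonalProjectionOnto (consensus d n)ᗮ (yg + zg)) : (consensus d n)ᗮ) : Vs d n)
        = (κ * ν⁻¹) • (projP d n (yg + zg)) from rfl]
    rw [norm_smul, Real.norm_eq_abs, abs_of_pos hA]
  set a : ℝ := ‖projP d n (yg + zg)‖ with ha
  set b : ℝ := ‖projP d n m‖ with hb
  set c : ℝ := ‖projP d n mp‖ with hc
  have hs : ‖u‖ ≤ κ * ν⁻¹ * a + b := by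
    rw [hu_eq]
    calc ‖projP d n v + projP d n m‖ ≤ ‖projP d n v‖ + ‖projP d n m‖ := norm_add_le _ _
      _ = κ * ν⁻¹ * a + b := by rw [hPv]
  -- turn hc2 into an inverse-free inequality
  have hc2' : χ * c ^ 2 ≤ (χ - 1) * ‖u‖ ^ 2 := by
    have h := mul_le_mul_of_nonneg_left hc2 (le_of_lt hχ0)
    calc χ * c ^ 2 ≤ χ * ((1 - χ⁻¹) * ‖u‖ ^ 2) := h
      _ = (χ - 1) * ‖u‖ ^ 2 := by field_simp
  have hstep : (χ - 1) * ‖u‖ ^ 2 ≤ (χ - 1) * (κ * ν⁻¹ * a + b) ^ 2 := by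
    apply mul_le_mul_of_nonneg_left _ (by linarith)
    exact pow_le_pow_left₀ (norm_nonneg _) hs 2
  have hc2'' : χ * c ^ 2 ≤ (χ - 1) * (κ * ν⁻¹ * a + b) ^ 2 := le_trans hc2' hstep
  have hcoef : 4 * χ * (1 - (4 * χ)⁻¹) = 4 * χ - 1 := by
    field_simp
  rw [hcoef]
  have ha0 : 0 ≤ a := norm_nonneg _
  have hb0 : 0 ≤ b := norm_nonneg _
  have hc0 : 0 ≤ c := norm_nonneg _
  nlinarith [sq_nonneg (2 * (χ - 1) * (κ * ν⁻¹ * a) - b), hc2'',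
    mul_nonneg (by linarith : (0:ℝ) ≤ 12 * χ - 4) (sq_nonneg (κ * ν⁻¹ * a)),
    mul_nonneg (mul_nonneg hA.le ha0) hb0, sq_nonneg (κ * ν⁻¹ * a), sq_nonneg c,
    mul_nonneg hA.le ha0]
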